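/- Let G be a finite group, x, y commuting real elements of G with coprime conjugacy class sizes and coprime orders. Then every prime dividing |x^G| or |y^G| also divides |(xy)^G|. -/

import Mathlib

/-- An element `x` of a group is *real* if it is conjugate to its inverse. -/
def IsRealEl (G : Type*) [Group G] (x : G) : Prop := ∃ g : G, g⁻¹ * x * g = x⁻¹

/-- The size of the conjugacy class of `x` in `G`. -/
noncomputable def clSize (G : Type*) [Group G] (x : G) : ℕ := Nat.card {y : G // IsConj x y}

lemma clSize_eq_index_stabilizer {G : Type*} [Group G] (z : G) :
    clSize G z = (MulAction.stabilizer (ConjAct G) z).index := by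
  rw [clSize, MulAction.index_stabilizer, ← Nat.card_coe_set_eq]
  exact Nat.card_congr (Equiv.subtypeEquivRight fun w => by
    rw [ConjAct.mem_orbit_conjAct, isConj_comm])

lemma exists_pow_mul_eq {G : Type*} [Group G] [Finite G] (x y : G) (hc : x * y = y * x)
    (hord : Nat.Coprime (orderOf x) (orderOf y)) : ∃ n : ℕ, (x * y) ^ n = x := by
  have hcomm : Commute x y := hc
  by_cases ha : orderOf x = 1
  · have hx1 : x = 1 := orderOf_eq_one_iff.mp ha
    exact ⟨orderOf y, by simp [hx1, pow_orderOf_eq_one]⟩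
  · have h1 : 1 < orderOf x :=
      lt_of_le_of_ne (Nat.one_le_iff_ne_zero.mpr (orderOf_pos x).ne') (Ne.symm ha)
    obtain ⟨c, -, hc'⟩ := Nat.exists_mul_mod_eq_one_of_coprime hord.symm h1
    refine ⟨orderOf y * c, ?_⟩
    rw [hcomm.mul_pow, pow_mul y, pow_orderOf_eq_one, one_pow, mul_one,
      ← pow_mod_orderOf, hc', pow_one]

lemma clSize_dvd_of_pow {G : Type*} [Group G] [Finite G] (z w : G) (h : ∃ n : ℕ, z ^ n = w) :
    clSize G w ∣ clSize G z := by
  rw [clSize_eq_index_stabilizer, clSize_eq_index_stabilizer]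
  obtain ⟨n, hn⟩ := h
  apply Subgroup.index_dvd_of_le
  intro g hg
  rw [MulAction.mem_stabilizer_iff] at hg ⊢
  calc g • w = g • z ^ n := by rw [hn]
    _ = (g • z) ^ n := smul_pow' g z n
    _ = w := by rw [hg, hn]

theorem stmt_5 {G : Type*} [Group G] [Finite G] (x y : G) (hx : IsRealEl G x)
    (hy : IsRealEl G y) (hc : x * y = y * x)
    (hcop : Nat.Coprime (clSize G x) (clSize G y))
    (hord : Nat.Coprime (orderOf x) (orderOf y)) :
    ∀ p : ℕ, p.Prime → (p ∣ clSize G x ∨ p ∣ clSize G y) → p ∣ clSize G (x * y) := by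
  intro p _ hp
  rcases hp with h | h
  · exact h.trans (clSize_dvd_of_pow _ _ (exists_pow_mul_eq x y hc hord))
  · have := exists_pow_mul_eq y x hc.symm hord.symm
    rw [← hc] at this
    exact h.trans (clSize_dvd_of_pow _ _ this)
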